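/- Let Γ be a bichromatic graph that is locally like W(F4), and let x and y be two vertices of Γ of different types at distance 2 in Γ. Then the induced subgraph of Γ on the set of common neighbors of x and y is a disjoint union of μ_s edges between two short vertices and μ_l edges between two long vertices, for some natural numbers μ_s, μ_l with 1 ≤ μ_s + μ_l ≤ 2; that is, the common neighborhood has 2(μ_s + μ_l) vertices, each common neighbor is adjacent to exactly one other common neighbor, and adjacent common neighbors have the same type. -/

import Mathlib

/-- The Weyl graph of type `Bₙ`: vertices `y_{i,j}`, `1 ≤ i,j ≤ n`; distinct vertices
`y_{i,j}`, `y_{k,l}` are adjacent iff `{i,j} ∩ {k,l} = ∅` or `(k,l) = (j,i)`. -/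
def WB (n : ℕ) : SimpleGraph (Fin n × Fin n) where
  Adj p q :=
    p ≠ q ∧ (({p.1, p.2} : Set (Fin n)) ∩ {q.1, q.2} = ∅ ∨ (q.1 = p.2 ∧ q.2 = p.1))
  symm := by
    constructor
    rintro ⟨a, b⟩ ⟨c, d⟩ ⟨hne, h⟩
    refine ⟨hne.symm, ?_⟩
    rcases h with h | ⟨h1, h2⟩
    · left; rw [Set.inter_comm] at h; exact h
    · right; exact ⟨h2.symm, h1.symm⟩
  loopless := by constructor; rintro ⟨a, b⟩ ⟨hne, _⟩; exact hne rfl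

/-- The coloring of `W(Bₙ)`: `y_{i,i}` is short (`true`), `y_{i,j}` with `i ≠ j` is long. -/
def WBcolor (n : ℕ) (p : Fin n × Fin n) : Bool := decide (p.1 = p.2)

/-- The coloring of `W(Cₙ)`: obtained from `W(Bₙ)` by exchanging short and long vertices. -/
def WCcolor (n : ℕ) (p : Fin n × Fin n) : Bool := !(WBcolor n p)

/-- Isomorphism of bichromatic graphs: a graph isomorphism preserving vertex types
(`true` = short, `false` = long). -/
def BIso {V : Type*} {W : Type*} (G : SimpleGraph V) (cG : V → Bool)
    (H : SimpleGraph W) (cH : W → Bool) : Prop :=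
  ∃ e : G ≃g H, ∀ v : V, cH (e v) = cG v

/-- A bichromatic graph is locally like `W(F₄)` if the local graph at every short vertex
is isomorphic to `W(B₃)` and the local graph at every long vertex is isomorphic to `W(C₃)`. -/
def LocallyLikeWF4 {V : Type*} (G : SimpleGraph V) (c : V → Bool) : Prop :=
  ∀ v : V,
    (c v = true → BIso (G.induce (G.neighborSet v)) (fun x => c x.1) (WB 3) (WBcolor 3)) ∧
    (c v = false → BIso (G.induce (G.neighborSet v)) (fun x => c x.1) (WB 3) (WCcolor 3))

lemma WB_adj_iff {n : ℕ} (p q : Fin n × Fin n) :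
    (WB n).Adj p q ↔ p ≠ q ∧ ((p.1 ≠ q.1 ∧ p.1 ≠ q.2 ∧ p.2 ≠ q.1 ∧ p.2 ≠ q.2) ∨
      (q.1 = p.2 ∧ q.2 = p.1)) := by
  show (p ≠ q ∧ _) ↔ _
  rw [and_congr_right_iff]
  intro _
  rw [or_congr_left]
  rw [Set.eq_empty_iff_forall_notMem]
  constructor
  · intro h
    refine ⟨?_, ?_, ?_, ?_⟩ <;> intro he
    · exact h q.1 ⟨Or.inl he.symm, Or.inl rfl⟩
    · exact h q.2 ⟨Or.inl he.symm, Or.inr rfl⟩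
    · exact h q.1 ⟨Or.inr he.symm, Or.inl rfl⟩
    · exact h q.2 ⟨Or.inr he.symm, Or.inr rfl⟩
  · rintro ⟨h1, h2, h3, h4⟩ a ⟨ha1, ha2⟩
    simp only [Set.mem_insert_iff, Set.mem_singleton_iff] at ha1 ha2
    rcases ha1 with rfl | rfl <;> tauto

instance {n : ℕ} : DecidableRel (WB n).Adj := fun p q =>
  decidable_of_iff' _ (WB_adj_iff p q)

lemma WB3_common : ∀ p q : Fin 3 × Fin 3, ¬(WB 3).Adj p q → WBcolor 3 p ≠ WBcolor 3 q →
    ∃ w, (WB 3).Adj p w ∧ (WB 3).Adj q w ∧ WBcolor 3 w = true ∧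
      ∀ w', (WB 3).Adj p w' → (WB 3).Adj q w' → w' = w := by decide

lemma WB3_diag_adj : ∀ p q : Fin 3 × Fin 3, p ≠ q → WBcolor 3 p = true →
    WBcolor 3 q = true → (WB 3).Adj p q := by decide

lemma induce_adj' {V : Type} {G : SimpleGraph V} {s : Set V} {a b : ↥s} :
    (G.induce s).Adj a b ↔ G.Adj a b := by
  simp [SimpleGraph.comap_adj]

/-- Transfer lemma: unique common neighbor. -/
lemma local_unique {V : Type} {G : SimpleGraph V} {c : V → Bool} (hloc : LocallyLikeWF4 G c)
    {z x y : V} (hx : G.Adj z x) (hy : G.Adj z y) (hxy : ¬ G.Adj x y) (hc : c x ≠ c y) :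
    ∃ w, G.Adj z w ∧ G.Adj x w ∧ G.Adj y w ∧ c w = c z ∧
      ∀ w', G.Adj z w' → G.Adj x w' → G.Adj y w' → w' = w := by
  have main : ∀ (cH : Fin 3 × Fin 3 → Bool),
      (∀ p, WBcolor 3 p = true → cH p = c z) →
      (∀ p q, cH p ≠ cH q → WBcolor 3 p ≠ WBcolor 3 q) →
      BIso (G.induce (G.neighborSet z)) (fun x => c x.1) (WB 3) cH →
      ∃ w, G.Adj z w ∧ G.Adj x w ∧ G.Adj y w ∧ c w = c z ∧
        ∀ w', G.Adj z w' → G.Adj x w' → G.Adj y w' → w' = w := by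
    rintro cH hdiag hflip ⟨e, he⟩
    set xx : ↥(G.neighborSet z) := ⟨x, hx⟩ with hxx
    set yy : ↥(G.neighborSet z) := ⟨y, hy⟩ with hyy
    have hnadj : ¬ (WB 3).Adj (e xx) (e yy) := by
      rw [e.map_adj_iff, induce_adj']
      exact hxy
    have hcol : WBcolor 3 (e xx) ≠ WBcolor 3 (e yy) := by
      apply hflip
      rw [he xx, he yy]
      exact hc
    obtain ⟨w, hpw, hqw, hwcol, huniq⟩ := WB3_common (e xx) (e yy) hnadj hcol
    refine ⟨(e.symm w : ↥(G.neighborSet z)), (e.symm w).2, ?_, ?_, ?_, ?_⟩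
    · have : (WB 3).Adj (e xx) (e (e.symm w)) := by
        rwa [RelIso.apply_symm_apply]
      rw [e.map_adj_iff, induce_adj'] at this
      exact this
    · have : (WB 3).Adj (e yy) (e (e.symm w)) := by
        rwa [RelIso.apply_symm_apply]
      rw [e.map_adj_iff, induce_adj'] at this
      exact this
    · have h1 := he (e.symm w)
      rw [RelIso.apply_symm_apply] at h1
      have h2 := hdiag w hwcol
      simpa using h1.symm.trans h2
    · intro w' hzw' hxw' hyw'
      set ww : ↥(G.neighborSet z) := ⟨w', hzw'⟩ with hww
      have h1 : (WB 3).Adj (e xx) (e ww) := by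
        rw [e.map_adj_iff, induce_adj']; exact hxw'
      have h2 : (WB 3).Adj (e yy) (e ww) := by
        rw [e.map_adj_iff, induce_adj']; exact hyw'
      have := huniq _ h1 h2
      have : ww = e.symm w := by
        apply e.injective
        rw [RelIso.apply_symm_apply]
        exact this
      exact congrArg Subtype.val this
  rcases hb : c z with _ | _
  · obtain ⟨e, he⟩ := (hloc z).2 hb
    exact hb ▸ main (WCcolor 3) (fun p hp => by rw [hb]; simp [WCcolor, hp])
      (fun p q h h2 => h (by simp [WCcolor, h2])) ⟨e, he⟩
  · obtain ⟨e, he⟩ := (hloc z).1 hb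
    exact hb ▸ main (WBcolor 3) (fun p hp => hp.trans hb.symm)
      (fun p q h h2 => h h2) ⟨e, he⟩

/-- Transfer lemma: two distinct neighbors of `v` with the same color as `v` are adjacent. -/
lemma local_adj {V : Type} {G : SimpleGraph V} {c : V → Bool} (hloc : LocallyLikeWF4 G c)
    {v z z' : V} (hz : G.Adj v z) (hz' : G.Adj v z') (hne : z ≠ z')
    (h1 : c z = c v) (h2 : c z' = c v) : G.Adj z z' := by
  have main : ∀ (cH : Fin 3 × Fin 3 → Bool),
      (∀ p, cH p = c v → WBcolor 3 p = true) →
      BIso (G.induce (G.neighborSet v)) (fun x => c x.1) (WB 3) cH →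
      G.Adj z z' := by
    rintro cH hdiag ⟨e, he⟩
    set zz : ↥(G.neighborSet v) := ⟨z, hz⟩ with hzz
    set zz' : ↥(G.neighborSet v) := ⟨z', hz'⟩ with hzz'
    have hne2 : e zz ≠ e zz' := by
      intro h
      exact hne (congrArg Subtype.val (e.injective h))
    have hadj := WB3_diag_adj (e zz) (e zz') hne2
      (hdiag _ (by rw [he zz]; exact h1)) (hdiag _ (by rw [he zz']; exact h2))
    rw [e.map_adj_iff, induce_adj'] at hadj
    exact hadj
  rcases hb : c v with _ | _
  · rw [hb] at h1 h2
    obtain ⟨e, he⟩ := (hloc v).2 hb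
    exact main (WCcolor 3) (fun p hp => by
      rw [hb] at hp
      simpa [WCcolor] using hp) ⟨e, he⟩
  · rw [hb] at h1 h2
    obtain ⟨e, he⟩ := (hloc v).1 hb
    exact main (WBcolor 3) (fun p hp => by rw [hb] at hp; exact hp) ⟨e, he⟩

lemma main_aux {V : Type} (G : SimpleGraph V) (c : V → Bool)
    (hloc : LocallyLikeWF4 G c) (x y : V)
    (hcx : c x = true) (hcy : c y = false) (hnadj : ¬ G.Adj x y)
    (hex : ∃ z, G.Adj x z ∧ G.Adj y z) :
    (∀ z ∈ G.commonNeighbors x y,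
      {z' ∈ G.commonNeighbors x y | G.Adj z z'}.ncard = 1) ∧
    (∀ z ∈ G.commonNeighbors x y, ∀ z' ∈ G.commonNeighbors x y,
      G.Adj z z' → c z = c z') ∧
    ∃ μs μl : ℕ, 1 ≤ μs + μl ∧ μs + μl ≤ 2 ∧
      {z ∈ G.commonNeighbors x y | c z = true}.ncard = 2 * μs ∧
      {z ∈ G.commonNeighbors x y | c z = false}.ncard = 2 * μl ∧
      (G.commonNeighbors x y).ncard = 2 * (μs + μl) := by
  set C := G.commonNeighbors x y with hC
  have hmemC : ∀ z, z ∈ C ↔ G.Adj x z ∧ G.Adj y z := fun z =>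
    SimpleGraph.mem_commonNeighbors G
  have hcne : c x ≠ c y := by rw [hcx, hcy]; simp
  -- partner
  have hpart : ∀ z ∈ C, ∃ w ∈ C, G.Adj z w ∧ c w = c z ∧
      ∀ w' ∈ C, G.Adj z w' → w' = w := by
    intro z hz
    rw [hmemC] at hz
    obtain ⟨w, hzw, hxw, hyw, hcw, huniq⟩ :=
      local_unique hloc hz.1.symm hz.2.symm hnadj hcne
    refine ⟨w, (hmemC w).mpr ⟨hxw, hyw⟩, hzw, hcw, ?_⟩
    intro w' hw' hzw'
    rw [hmemC] at hw'
    exact huniq w' hzw' hw'.1 hw'.2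
  have part1 : ∀ z ∈ C, {z' ∈ C | G.Adj z z'}.ncard = 1 := by
    intro z hz
    obtain ⟨w, hwC, hzw, _, huniq⟩ := hpart z hz
    have : {z' ∈ C | G.Adj z z'} = {w} := by
      ext a
      simp only [Set.mem_setOf_eq, Set.mem_singleton_iff]
      constructor
      · rintro ⟨ha, hza⟩; exact huniq a ha hza
      · rintro rfl; exact ⟨hwC, hzw⟩
    rw [this, Set.ncard_singleton]
  have part2 : ∀ z ∈ C, ∀ z' ∈ C, G.Adj z z' → c z = c z' := by
    intro z hz z' hz' hzz'
    obtain ⟨w, _, _, hcw, huniq⟩ := hpart z hz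
    rw [huniq z' hz' hzz', hcw]
  refine ⟨part1, part2, ?_⟩
  -- the short and long parts
  have key : ∀ (b : Bool) (v : V), c v = b → (∀ z ∈ C, G.Adj v z) →
      {z ∈ C | c z = b} = ∅ ∨
        ∃ a w, a ≠ w ∧ {z ∈ C | c z = b} = {a, w} := by
    intro b v hvb hadjall
    by_cases hem : {z ∈ C | c z = b} = ∅
    · exact Or.inl hem
    right
    obtain ⟨z, hzC, hzb⟩ := Set.nonempty_iff_ne_empty.mpr hem
    obtain ⟨w, hwC, hzw, hcw, huniq⟩ := hpart z hzC
    refine ⟨z, w, hzw.ne, ?_⟩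
    ext a
    simp only [Set.mem_setOf_eq, Set.mem_insert_iff, Set.mem_singleton_iff]
    constructor
    · rintro ⟨haC, hab⟩
      by_cases haz : a = z
      · exact Or.inl haz
      · right
        refine huniq a haC ?_
        exact local_adj hloc (hadjall z hzC) (hadjall a haC) (Ne.symm haz)
          (hzb.trans hvb.symm) (hab.trans hvb.symm)
    · rintro (rfl | rfl)
      · exact ⟨hzC, hzb⟩
      · exact ⟨hwC, hcw.trans hzb⟩
  have hadjx : ∀ z ∈ C, G.Adj x z := fun z hz => ((hmemC z).mp hz).1
  have hadjy : ∀ z ∈ C, G.Adj y z := fun z hz => ((hmemC z).mp hz).2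
  have hS := key true x hcx hadjx
  have hL := key false y hcy hadjy
  have hunion : C = {z ∈ C | c z = true} ∪ {z ∈ C | c z = false} := by
    ext a
    simp only [Set.mem_union, Set.mem_setOf_eq]
    constructor
    · intro h; rcases hb : c a with _ | _
      · exact Or.inr ⟨h, rfl⟩
      · exact Or.inl ⟨h, rfl⟩
    · rintro (⟨h, _⟩ | ⟨h, _⟩) <;> exact h
  have hdisj : Disjoint {z ∈ C | c z = true} {z ∈ C | c z = false} := by
    rw [Set.disjoint_left]
    rintro a ⟨_, h1⟩ ⟨_, h2⟩
    rw [h1] at h2; exact Bool.noConfusion h2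
  have hCne : C.Nonempty := by
    obtain ⟨z, hz1, hz2⟩ := hex
    exact ⟨z, (hmemC z).mpr ⟨hz1, hz2⟩⟩
  have hncard_union : ∀ (s t : Set V), s.Finite → t.Finite → Disjoint s t →
      (s ∪ t).ncard = s.ncard + t.ncard := fun s t hs ht hd =>
    Set.ncard_union_eq hd hs ht
  rcases hS with hS | ⟨a, w, haw, hS⟩ <;> rcases hL with hL | ⟨a', w', haw', hL⟩
  · exfalso
    obtain ⟨z, hz⟩ := hCne
    have : z ∈ ({z ∈ C | c z = true} ∪ {z ∈ C | c z = false}) := hunion ▸ hz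
    rw [hS, hL] at this
    simp at this
  · refine ⟨0, 1, by norm_num, by norm_num, ?_, ?_, ?_⟩
    · rw [hS, Set.ncard_empty]
    · rw [hL, Set.ncard_pair haw']
    · rw [hunion, hS, Set.empty_union, hL, Set.ncard_pair haw']
  · refine ⟨1, 0, by norm_num, by norm_num, ?_, ?_, ?_⟩
    · rw [hS, Set.ncard_pair haw]
    · rw [hL, Set.ncard_empty]
    · rw [hunion, hL, Set.union_empty, hS, Set.ncard_pair haw]
  · refine ⟨1, 1, by norm_num, by norm_num, ?_, ?_, ?_⟩
    · rw [hS, Set.ncard_pair haw]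
    · rw [hL, Set.ncard_pair haw']
    · rw [hunion, hncard_union _ _ (hS ▸ (Set.finite_singleton _).insert _)
        (hL ▸ (Set.finite_singleton _).insert _) hdisj,
        hS, hL, Set.ncard_pair haw, Set.ncard_pair haw']

theorem common_neighbors_mixed_type_distance_two {V : Type} (G : SimpleGraph V) (c : V → Bool)
    (hloc : LocallyLikeWF4 G c) (x y : V)
    (htype : c x ≠ c y) (hdist : G.dist x y = 2) :
    (∀ z ∈ G.commonNeighbors x y,
      {z' ∈ G.commonNeighbors x y | G.Adj z z'}.ncard = 1) ∧
    (∀ z ∈ G.commonNeighbors x y, ∀ z' ∈ G.commonNeighbors x y,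
      G.Adj z z' → c z = c z') ∧
    ∃ μs μl : ℕ, 1 ≤ μs + μl ∧ μs + μl ≤ 2 ∧
      {z ∈ G.commonNeighbors x y | c z = true}.ncard = 2 * μs ∧
      {z ∈ G.commonNeighbors x y | c z = false}.ncard = 2 * μl ∧
      (G.commonNeighbors x y).ncard = 2 * (μs + μl) := by
  have hnadj : ¬ G.Adj x y := by
    intro h
    rw [← SimpleGraph.dist_eq_one_iff_adj] at h
    omega
  have hne0 : G.dist x y ≠ 0 := by omega
  obtain ⟨p, hp⟩ := (SimpleGraph.Reachable.of_dist_ne_zero hne0).exists_walk_length_eq_dist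
  rw [hdist] at hp
  have hex : ∃ z, G.Adj x z ∧ G.Adj y z := by
    refine ⟨p.getVert 1, ?_, ?_⟩
    · have := p.adj_getVert_succ (i := 0) (by omega)
      rwa [p.getVert_zero] at this
    · have := p.adj_getVert_succ (i := 1) (by omega)
      have h2 : p.getVert 2 = y := by
        have := p.getVert_length
        rwa [hp] at this
      rw [h2] at this
      exact this.symm
  rcases hcx : c x with _ | _
  · have hcy : c y = true := by
      rcases hb : c y with _ | _
      · exfalso; rw [hcx, hb] at htype; exact htype rfl
      · rfl
    rw [SimpleGraph.commonNeighbors_symm]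
    exact main_aux G c hloc y x hcy hcx (fun h => hnadj h.symm)
      (by obtain ⟨z, h1, h2⟩ := hex; exact ⟨z, h2, h1⟩)
  · have hcy : c y = false := by
      rcases hb : c y with _ | _
      · rfl
      · exfalso; rw [hcx, hb] at htype; exact htype rfl
    exact main_aux G c hloc x y hcx hcy hnadj hex
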